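/- arXiv:2106.06367 — 4 statements merged into one kernel-verified Lean document; each statement's English description precedes it below -/
import Mathlib

section
/- There exists a constant C > 0, depending only on c₂, such that for every t ≥ 1 and every continuously differentiable function f : ℝ → ℂ with f ∈ L²(ℝ) and 𝓛_t f ∈ L²(ℝ), one has sup_{x∈ℝ} |f(x)| ≤ C t^{−1/2} ‖f‖_{L²(ℝ)}^{1/2} ‖𝓛_t f‖_{L²(ℝ)}^{1/2}. -/
open MeasureTheory Real Set

noncomputable section

/-- For `t > 0`, the vector field `𝓛_t` acting on functions of `x` by
`(𝓛_t f)(x) = (x + c₁ t) f(x) − 2 i c₂ t f′(x)`. -/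
def vecL (c₂ c₁ t : ℝ) (f : ℝ → ℂ) : ℝ → ℂ :=
  fun x => ((x : ℂ) + (c₁ : ℂ) * (t : ℂ)) * f x - 2 * Complex.I * (c₂ : ℂ) * (t : ℂ) * deriv f x

/-- There is a constant `C > 0` depending only on `c₂` such that for every
`t ≥ 1` and every `C¹` function `f : ℝ → ℂ` with `f ∈ L²` and `𝓛_t f ∈ L²`,
`sup_x |f(x)| ≤ C t^{-1/2} ‖f‖_{L²}^{1/2} ‖𝓛_t f‖_{L²}^{1/2}`. -/
theorem sup_bound_by_L (c₂ : ℝ) (hc₂ : 0 < c₂) :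
    ∃ C : ℝ, 0 < C ∧ ∀ c₁ : ℝ, ∀ t : ℝ, 1 ≤ t → ∀ f : ℝ → ℂ,
      ContDiff ℝ 1 f →
      MemLp f 2 volume →
      MemLp (vecL c₂ c₁ t f) 2 volume →
      ∀ x : ℝ, ‖f x‖ ≤ C * t ^ (-(1:ℝ)/2) *
        (eLpNorm f 2 volume).toReal ^ ((1:ℝ)/2) *
        (eLpNorm (vecL c₂ c₁ t f) 2 volume).toReal ^ ((1:ℝ)/2) := by
  refine ⟨(Real.sqrt c₂)⁻¹, inv_pos.mpr (Real.sqrt_pos.mpr hc₂), ?_⟩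
  intro c₁ t ht f hf hf2 hL2 x
  have ht0 : (0:ℝ) < t := lt_of_lt_of_le one_pos ht
  have hct : (0:ℝ) < c₂ * t := by positivity
  set L : ℝ → ℂ := vecL c₂ c₁ t f with hLdef
  have hfd : ∀ y, HasDerivAt f (deriv f y) y := fun y =>
    ((hf.differentiable one_ne_zero) y).hasDerivAt
  have hLcont : Continuous L := by
    have h1 : Continuous (deriv f) := hf.continuous_deriv le_rfl
    have h2 : Continuous f := hf.continuous
    unfold L
    unfold vecL
    continuity
  set h : ℝ → ℝ := fun y => ‖f y‖ ^ 2 with hhdef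
  set D : ℝ → ℝ := fun y => (Complex.I * (starRingEnd ℂ) (f y) * L y).re / (c₂ * t) with hDdef
  -- the derivative of `h` is `D`
  have hD : ∀ y, HasDerivAt h (D y) y := by
    intro y
    have h1 : HasDerivAt (fun z => f z * (starRingEnd ℂ) (f z))
        (deriv f y * (starRingEnd ℂ) (f y) + f y * (starRingEnd ℂ) (deriv f y)) y :=
      (hfd y).mul ((hfd y).star)
    have h2 := Complex.reCLM.hasFDerivAt.comp_hasDerivAt y h1
    have heq : h = fun z => (f z * (starRingEnd ℂ) (f z)).re := by
      funext z
      simp [hhdef, Complex.mul_conj, Complex.normSq_eq_norm_sq,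
        ← Complex.ofReal_pow, Complex.ofReal_re]
    rw [heq]
    refine h2.congr_deriv ?_
    simp only [hDdef, hLdef, vecL, Complex.reCLM_apply]
    set a := f y
    set b := deriv f y
    simp only [Complex.mul_re, Complex.mul_im, Complex.sub_re, Complex.sub_im,
      Complex.add_re, Complex.add_im, Complex.I_re, Complex.I_im, Complex.conj_re,
      Complex.conj_im, Complex.ofReal_re, Complex.ofReal_im, Complex.re_ofNat,
      Complex.im_ofNat]
    field_simp
    ring
  -- pointwise bound for `D`
  have hDbound : ∀ y, |D y| ≤ ‖f y‖ * ‖L y‖ / (c₂ * t) := by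
    intro y
    have h1 : |(Complex.I * (starRingEnd ℂ) (f y) * L y).re| ≤ ‖f y‖ * ‖L y‖ := by
      calc |(Complex.I * (starRingEnd ℂ) (f y) * L y).re|
          ≤ ‖Complex.I * (starRingEnd ℂ) (f y) * L y‖ := Complex.abs_re_le_norm _
        _ = ‖f y‖ * ‖L y‖ := by
            simp [norm_mul]
    rw [hDdef]
    rw [abs_div, abs_of_pos hct]
    exact div_le_div_of_nonneg_right h1 hct.le |>.trans_eq rfl
  -- integrability of `fun y => ‖f y‖ * ‖L y‖` and Cauchy-Schwarz
  have hprod : Integrable (fun y => ‖f y‖ * ‖L y‖) volume := by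
    have hfsq : Integrable (fun y => ‖f y‖ ^ 2) volume :=
      (memLp_two_iff_integrable_sq_norm hf2.1).mp hf2
    have hLsq : Integrable (fun y => ‖L y‖ ^ 2) volume :=
      (memLp_two_iff_integrable_sq_norm hL2.1).mp hL2
    refine Integrable.mono' ((hfsq.add hLsq).div_const 2)
      ((hf.continuous.norm.mul hLcont.norm).aestronglyMeasurable) ?_
    filter_upwards with y
    rw [Real.norm_eq_abs, abs_of_nonneg (by positivity)]
    simp only [Pi.add_apply]
    nlinarith [sq_nonneg (‖f y‖ - ‖L y‖), norm_nonneg (f y), norm_nonneg (L y)]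
  set A : ℝ := (eLpNorm f 2 volume).toReal with hAdef
  set B : ℝ := (eLpNorm L 2 volume).toReal with hBdef
  have hA0 : 0 ≤ A := ENNReal.toReal_nonneg
  have hB0 : 0 ≤ B := ENNReal.toReal_nonneg
  have hCS : ∫ y, ‖f y‖ * ‖L y‖ ≤ A * B := by
    set φ : Lp ℝ 2 volume := (hf2.norm).toLp (fun y => ‖f y‖) with hφdef
    set ψ : Lp ℝ 2 volume := (hL2.norm).toLp (fun y => ‖L y‖) with hψdef
    have h1 : ∫ y, ‖f y‖ * ‖L y‖ = (inner ℝ φ ψ : ℝ) := by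
      rw [L2.inner_def]
      refine integral_congr_ae ?_
      filter_upwards [hf2.norm.coeFn_toLp, hL2.norm.coeFn_toLp] with y hy1 hy2
      simp [hφdef, hψdef, hy1, hy2, RCLike.inner_apply, mul_comm]
    have h2 : (inner ℝ φ ψ : ℝ) ≤ ‖φ‖ * ‖ψ‖ := real_inner_le_norm φ ψ
    have h3 : ‖φ‖ = A := by
      rw [hφdef, Lp.norm_toLp, eLpNorm_norm]
    have h4 : ‖ψ‖ = B := by
      rw [hψdef, Lp.norm_toLp, eLpNorm_norm]
    rw [h1]
    calc (inner ℝ φ ψ : ℝ) ≤ ‖φ‖ * ‖ψ‖ := h2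
      _ = A * B := by rw [h3, h4]
  -- `D` is integrable with `∫ |D| ≤ A * B / (c₂ * t)`
  have hDcont : Continuous D := by
    have h1 : Continuous (deriv f) := hf.continuous_deriv le_rfl
    have h2 : Continuous f := hf.continuous
    unfold D
    fun_prop
  have hDint : Integrable D volume := by
    refine Integrable.mono' (hprod.div_const (c₂ * t)) hDcont.aestronglyMeasurable ?_
    filter_upwards with y
    simpa [Real.norm_eq_abs] using hDbound y
  have hDabsint : Integrable (fun y => |D y|) volume := hDint.abs
  have hIabs : ∫ y, |D y| ≤ A * B / (c₂ * t) := by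
    have h1 : ∫ y, |D y| ≤ ∫ y, ‖f y‖ * ‖L y‖ / (c₂ * t) := by
      refine integral_mono hDabsint (hprod.div_const _) ?_
      intro y; exact hDbound y
    have h2 : ∫ y, ‖f y‖ * ‖L y‖ / (c₂ * t) = (∫ y, ‖f y‖ * ‖L y‖) / (c₂ * t) :=
      integral_div _ _
    calc ∫ y, |D y| ≤ (∫ y, ‖f y‖ * ‖L y‖) / (c₂ * t) := by rw [← h2]; exact h1
      _ ≤ A * B / (c₂ * t) := by
          exact div_le_div_of_nonneg_right hCS hct.le
  -- `h x ≤ ∫ |D|`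
  have hInt_h : Integrable h volume := (memLp_two_iff_integrable_sq_norm hf2.1).mp hf2
  have hmain : h x ≤ ∫ y, |D y| := by
    refine le_of_forall_pos_le_add ?_
    intro ε hε
    -- find `y < x` with `h y < ε`
    obtain ⟨y, hyx, hyε⟩ : ∃ y, y < x ∧ h y < ε := by
      by_contra hcon
      push_neg at hcon
      have hsub : Iio x ⊆ {z | ε ≤ h z} := fun z hz => hcon z hz
      have hfin : volume {z | ε ≤ h z} < ⊤ := hInt_h.measure_ge_lt_top hε
      have : volume (Iio x) ≤ volume {z | ε ≤ h z} := measure_mono hsub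
      rw [Real.volume_Iio] at this
      exact absurd (lt_of_le_of_lt this hfin) (lt_irrefl _)
    -- FTC
    have hftc : (∫ z in y..x, D z) = h x - h y := by
      refine intervalIntegral.integral_eq_sub_of_hasDerivAt (fun z _ => hD z) ?_
      exact hDcont.intervalIntegrable _ _
    have hle : (∫ z in y..x, D z) ≤ ∫ z, |D z| := by
      calc (∫ z in y..x, D z) ≤ ∫ z in y..x, |D z| := by
            refine intervalIntegral.integral_mono hyx.le
              (hDcont.intervalIntegrable _ _) ((hDcont.abs).intervalIntegrable _ _) ?_
            intro z; exact le_abs_self _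
        _ = ∫ z in Ioc y x, |D z| := intervalIntegral.integral_of_le hyx.le
        _ ≤ ∫ z, |D z| := by
            refine setIntegral_le_integral hDabsint ?_
            filter_upwards with z using abs_nonneg _
    have : h x = h y + ∫ z in y..x, D z := by rw [hftc]; ring
    rw [this]
    have := add_le_add hyε.le hle
    linarith
  -- conclude
  have hfinal : h x ≤ A * B / (c₂ * t) := hmain.trans hIabs
  have hnorm : ‖f x‖ = Real.sqrt (h x) := by
    rw [hhdef]
    exact (Real.sqrt_sq (norm_nonneg _)).symm
  rw [hnorm]
  have hsq : Real.sqrt (h x) ≤ Real.sqrt (A * B / (c₂ * t)) := Real.sqrt_le_sqrt hfinal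
  refine hsq.trans ?_
  have hexp : Real.sqrt (A * B / (c₂ * t)) =
      Real.sqrt A * Real.sqrt B / (Real.sqrt c₂ * Real.sqrt t) := by
    rw [Real.sqrt_div (by positivity : (0:ℝ) ≤ A * B), Real.sqrt_mul hA0,
      Real.sqrt_mul hc₂.le]
  rw [hexp]
  have h1 : t ^ (-(1:ℝ)/2) = (Real.sqrt t)⁻¹ := by
    rw [neg_div, Real.rpow_neg ht0.le, Real.sqrt_eq_rpow]
  have h2 : A ^ ((1:ℝ)/2) = Real.sqrt A := (Real.sqrt_eq_rpow A).symm
  have h3 : B ^ ((1:ℝ)/2) = Real.sqrt B := (Real.sqrt_eq_rpow B).symm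
  rw [h1, h2, h3]
  exact le_of_eq (by ring)

end
end

section
/- There exists a constant C > 0, depending only on c₂, such that for every t ≥ 1 and every Schwartz function f : ℝ → ℂ, one has ‖𝓛_t f‖_{L⁴(ℝ)} ≤ C ‖f‖_{L^∞(ℝ)}^{1/2} ‖𝓛_t² f‖_{L²(ℝ)}^{1/2}, where 𝓛_t² f = 𝓛_t(𝓛_t f). -/
open MeasureTheory Real Set
open Topology ENNReal

noncomputable section

lemma alg (β A : ℝ) (Fv G H DF DG : ℂ)
    (hG : G = (A:ℂ) * Fv - Complex.I * (β:ℂ) * DF)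
    (hH : H = (A:ℂ) * G - Complex.I * (β:ℂ) * DG) :
    β * ((Complex.I * (starRingEnd ℂ) DF * G + Complex.I * (starRingEnd ℂ) Fv * DG).re *
        ((starRingEnd ℂ) G * G).re +
      (Complex.I * (starRingEnd ℂ) Fv * G).re *
        ((starRingEnd ℂ) DG * G + (starRingEnd ℂ) G * DG).re) =
    ((starRingEnd ℂ) G * G).re ^ 2 - ((starRingEnd ℂ) Fv * H).re * ((starRingEnd ℂ) G * G).re -
      2 * (Complex.I * (starRingEnd ℂ) Fv * G).re * ((starRingEnd ℂ) G * H).im := by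
  subst hG hH
  simp only [Complex.mul_re, Complex.mul_im, Complex.add_re, Complex.add_im, Complex.sub_re,
    Complex.sub_im, Complex.I_re, Complex.I_im, Complex.conj_re, Complex.conj_im,
    Complex.ofReal_re, Complex.ofReal_im]
  ring

lemma keylemma (β c : ℝ) (hβ : 0 < β) (f g h : SchwartzMap ℝ ℂ)
    (hg : ∀ x : ℝ, g x = ((x + c : ℝ):ℂ) * f x - Complex.I * (β:ℂ) * deriv f x)
    (hh : ∀ x : ℝ, h x = ((x + c : ℝ):ℂ) * g x - Complex.I * (β:ℂ) * deriv g x) :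
    ∫ x : ℝ, ‖g x‖^4 ≤ 3 * (⨆ x : ℝ, ‖f x‖) * ∫ x : ℝ, ‖h x‖ * ‖g x‖^2 := by
  set M := ⨆ x : ℝ, ‖f x‖ with hMdef
  have hbdd : BddAbove (Set.range fun x : ℝ => ‖f x‖) := by
    refine ⟨SchwartzMap.seminorm ℝ 0 0 f, ?_⟩
    rintro y ⟨x, rfl⟩
    exact f.norm_le_seminorm ℝ x
  have hM : ∀ x : ℝ, ‖f x‖ ≤ M := fun x => le_ciSup hbdd x
  have hM0 : 0 ≤ M := (norm_nonneg _).trans (hM 0)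
  set F : ℝ → ℝ := fun x =>
    (Complex.I * (starRingEnd ℂ) (f x) * g x).re * ((starRingEnd ℂ) (g x) * g x).re with hFdef
  set Φ : ℝ → ℝ := fun x => β⁻¹ *
    (((starRingEnd ℂ) (g x) * g x).re ^ 2
      - ((starRingEnd ℂ) (f x) * h x).re * ((starRingEnd ℂ) (g x) * g x).re
      - 2 * (Complex.I * (starRingEnd ℂ) (f x) * g x).re
          * ((starRingEnd ℂ) (g x) * h x).im) with hΦdef
  have hFderiv : ∀ x : ℝ, HasDerivAt F (Φ x) x := by
    intro x
    have hfd : HasDerivAt (⇑f) (deriv f x) x := f.differentiableAt.hasDerivAt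
    have hgd : HasDerivAt (⇑g) (deriv g x) x := g.differentiableAt.hasDerivAt
    have hconjf : HasDerivAt (fun y => (starRingEnd ℂ) (f y)) ((starRingEnd ℂ) (deriv f x)) x :=
      Complex.conjCLE.toContinuousLinearMap.hasFDerivAt.comp_hasDerivAt x hfd
    have hconjg : HasDerivAt (fun y => (starRingEnd ℂ) (g y)) ((starRingEnd ℂ) (deriv g x)) x :=
      Complex.conjCLE.toContinuousLinearMap.hasFDerivAt.comp_hasDerivAt x hgd
    have d1 : HasDerivAt (fun y => Complex.I * (starRingEnd ℂ) (f y) * g y)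
        ((Complex.I * (starRingEnd ℂ) (deriv f x)) * g x
          + (Complex.I * (starRingEnd ℂ) (f x)) * deriv g x) x :=
      (hconjf.const_mul Complex.I).mul hgd
    have d2 : HasDerivAt (fun y => (starRingEnd ℂ) (g y) * g y)
        ((starRingEnd ℂ) (deriv g x) * g x + (starRingEnd ℂ) (g x) * deriv g x) x :=
      hconjg.mul hgd
    have d1re := Complex.reCLM.hasFDerivAt.comp_hasDerivAt x d1
    have d2re := Complex.reCLM.hasFDerivAt.comp_hasDerivAt x d2
    have dF := d1re.mul d2re
    refine HasDerivAt.congr_deriv dF (Eq.symm ?_)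
    have halg := alg β (x + c) (f x) (g x) (h x) (deriv f x) (deriv g x) (hg x) (hh x)
    simp only [hΦdef, Complex.reCLM_apply, Function.comp_def]
    rw [← halg]
    field_simp
  -- norm of conj-mul
  have hN : ∀ z : ℂ, ((starRingEnd ℂ) z * z).re = ‖z‖^2 := by
    intro z
    rw [mul_comm, Complex.mul_conj]
    simp [Complex.sq_norm]
  set Mg : ℝ := SchwartzMap.seminorm ℝ 0 0 g with hMgdef
  set Mh : ℝ := SchwartzMap.seminorm ℝ 0 0 h with hMhdef
  have hMg : ∀ x : ℝ, ‖g x‖ ≤ Mg := g.norm_le_seminorm ℝ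
  have hMh : ∀ x : ℝ, ‖h x‖ ≤ Mh := h.norm_le_seminorm ℝ
  have hMg0 : 0 ≤ Mg := (norm_nonneg _).trans (hMg 0)
  have hMh0 : 0 ≤ Mh := (norm_nonneg _).trans (hMh 0)
  -- integrability
  have hgint := g.integrable (μ := volume)
  have hint_g4 : Integrable (fun x : ℝ => ‖g x‖^4) := by
    refine (hgint.norm.const_mul (Mg^3)).mono' ?_ (Filter.Eventually.of_forall fun x => ?_)
    · exact (g.continuous.norm.pow 4).aestronglyMeasurable
    · have h1 : ‖g x‖^4 = ‖g x‖^3 * ‖g x‖ := by ring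
      rw [Real.norm_of_nonneg (by positivity), h1]
      exact mul_le_mul_of_nonneg_right (pow_le_pow_left₀ (norm_nonneg _) (hMg x) 3)
        (norm_nonneg _)
  have hint_hg2 : Integrable (fun x : ℝ => ‖h x‖ * ‖g x‖^2) := by
    refine (hgint.norm.const_mul (Mh * Mg)).mono' ?_ (Filter.Eventually.of_forall fun x => ?_)
    · exact (h.continuous.norm.mul (g.continuous.norm.pow 2)).aestronglyMeasurable
    · rw [Real.norm_of_nonneg (by positivity)]
      calc ‖h x‖ * ‖g x‖^2 = (‖h x‖ * ‖g x‖) * ‖g x‖ := by ring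
        _ ≤ (Mh * Mg) * ‖g x‖ := by
            apply mul_le_mul_of_nonneg_right _ (norm_nonneg _)
            exact mul_le_mul (hMh x) (hMg x) (norm_nonneg _) hMh0
  -- pointwise estimates
  have e1 : ∀ x : ℝ, |((starRingEnd ℂ) (f x) * h x).re| ≤ ‖f x‖ * ‖h x‖ := by
    intro x
    calc |((starRingEnd ℂ) (f x) * h x).re| ≤ ‖(starRingEnd ℂ) (f x) * h x‖ :=
          Complex.abs_re_le_norm _
      _ = ‖f x‖ * ‖h x‖ := by rw [norm_mul, RCLike.norm_conj]
  have e2 : ∀ x : ℝ, |(Complex.I * (starRingEnd ℂ) (f x) * g x).re| ≤ ‖f x‖ * ‖g x‖ := by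
    intro x
    calc |(Complex.I * (starRingEnd ℂ) (f x) * g x).re|
        ≤ ‖Complex.I * (starRingEnd ℂ) (f x) * g x‖ := Complex.abs_re_le_norm _
      _ = ‖f x‖ * ‖g x‖ := by
          rw [norm_mul, norm_mul, Complex.norm_I, one_mul, RCLike.norm_conj]
  have e3 : ∀ x : ℝ, |((starRingEnd ℂ) (g x) * h x).im| ≤ ‖g x‖ * ‖h x‖ := by
    intro x
    calc |((starRingEnd ℂ) (g x) * h x).im| ≤ ‖(starRingEnd ℂ) (g x) * h x‖ :=
          Complex.abs_im_le_norm _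
      _ = ‖g x‖ * ‖h x‖ := by rw [norm_mul, RCLike.norm_conj]
  have hint_Φ : Integrable Φ := by
    refine (hgint.norm.const_mul (β⁻¹ * (Mg^3 + M * Mh * Mg + 2 * (M * Mg * Mh)))).mono' ?_
      (Filter.Eventually.of_forall fun x => ?_)
    · apply Continuous.aestronglyMeasurable
      have cconj : Continuous fun z : ℂ => (starRingEnd ℂ) z := continuous_star
      refine continuous_const.mul ((Continuous.sub (Continuous.sub ?_ ?_) ?_))
      · exact ((Complex.continuous_re.comp ((cconj.comp g.continuous).mul
          g.continuous)).pow 2)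
      · exact (Complex.continuous_re.comp ((cconj.comp f.continuous).mul
          h.continuous)).mul (Complex.continuous_re.comp ((cconj.comp
          g.continuous).mul g.continuous))
      · exact ((continuous_const.mul (Complex.continuous_re.comp ((continuous_const.mul
          (cconj.comp f.continuous)).mul g.continuous))).mul
          (Complex.continuous_im.comp ((cconj.comp g.continuous).mul
          h.continuous)))
    · simp only [hΦdef]
      rw [Real.norm_eq_abs, abs_mul, _root_.abs_of_nonneg (by positivity : (0:ℝ) ≤ β⁻¹), mul_assoc β⁻¹]
      apply mul_le_mul_of_nonneg_left _ (by positivity : (0:ℝ) ≤ β⁻¹)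
      have hNx := hN (g x)
      have b1 : |((starRingEnd ℂ) (g x) * g x).re ^ 2| ≤ Mg^3 * ‖g x‖ := by
        rw [_root_.abs_of_nonneg (sq_nonneg _), hNx]
        calc (‖g x‖^2)^2 = ‖g x‖^3 * ‖g x‖ := by ring
          _ ≤ Mg^3 * ‖g x‖ := mul_le_mul_of_nonneg_right
              (pow_le_pow_left₀ (norm_nonneg _) (hMg x) 3) (norm_nonneg _)
      have b2 : |((starRingEnd ℂ) (f x) * h x).re * ((starRingEnd ℂ) (g x) * g x).re|
          ≤ M * Mh * Mg * ‖g x‖ := by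
        rw [abs_mul, _root_.abs_of_nonneg (by rw [hNx]; positivity : (0:ℝ) ≤ ((starRingEnd ℂ) (g x) * g x).re), hNx]
        calc |((starRingEnd ℂ) (f x) * h x).re| * ‖g x‖^2
            ≤ (‖f x‖ * ‖h x‖) * ‖g x‖^2 :=
              mul_le_mul_of_nonneg_right (e1 x) (sq_nonneg _)
          _ = (‖f x‖ * ‖h x‖ * ‖g x‖) * ‖g x‖ := by ring
          _ ≤ (M * Mh * Mg) * ‖g x‖ := by
              apply mul_le_mul_of_nonneg_right _ (norm_nonneg _)
              exact mul_le_mul (mul_le_mul (hM x) (hMh x) (norm_nonneg _) hM0)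
                (hMg x) (norm_nonneg _) (by positivity)
      have b3 : |2 * (Complex.I * (starRingEnd ℂ) (f x) * g x).re
          * ((starRingEnd ℂ) (g x) * h x).im| ≤ 2 * (M * Mg * Mh) * ‖g x‖ := by
        rw [abs_mul, abs_mul, _root_.abs_two]
        calc 2 * |(Complex.I * (starRingEnd ℂ) (f x) * g x).re|
              * |((starRingEnd ℂ) (g x) * h x).im|
            ≤ 2 * (‖f x‖ * ‖g x‖) * (‖g x‖ * ‖h x‖) := by
              apply mul_le_mul _ (e3 x) (abs_nonneg _) (by positivity)
              exact mul_le_mul_of_nonneg_left (e2 x) (by norm_num)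
          _ = 2 * (‖f x‖ * ‖g x‖ * ‖h x‖) * ‖g x‖ := by ring
          _ ≤ 2 * (M * Mg * Mh) * ‖g x‖ := by
              apply mul_le_mul_of_nonneg_right _ (norm_nonneg _)
              apply mul_le_mul_of_nonneg_left _ (by norm_num)
              exact mul_le_mul (mul_le_mul (hM x) (hMg x) (norm_nonneg _) hM0)
                (hMh x) (norm_nonneg _) (by positivity)
      calc |((starRingEnd ℂ) (g x) * g x).re ^ 2
            - ((starRingEnd ℂ) (f x) * h x).re * ((starRingEnd ℂ) (g x) * g x).re
            - 2 * (Complex.I * (starRingEnd ℂ) (f x) * g x).re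
              * ((starRingEnd ℂ) (g x) * h x).im|
          ≤ |((starRingEnd ℂ) (g x) * g x).re ^ 2|
            + |((starRingEnd ℂ) (f x) * h x).re * ((starRingEnd ℂ) (g x) * g x).re|
            + |2 * (Complex.I * (starRingEnd ℂ) (f x) * g x).re
              * ((starRingEnd ℂ) (g x) * h x).im| := by
            exact (abs_sub _ _).trans (add_le_add_left (abs_sub _ _) _)
        _ ≤ Mg^3 * ‖g x‖ + M * Mh * Mg * ‖g x‖ + 2 * (M * Mg * Mh) * ‖g x‖ := by
            linarith [b1, b2, b3]
        _ = (Mg^3 + M * Mh * Mg + 2 * (M * Mg * Mh)) * ‖g x‖ := by ring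
  -- limits of F at ±∞
  have hg0cocompact : Filter.Tendsto (fun x : ℝ => ‖g x‖) (Filter.cocompact ℝ) (𝓝 0) := by
    have := g.toZeroAtInfty.zero_at_infty'
    simpa using this.norm
  have hFbound : ∀ x : ℝ, ‖F x‖ ≤ (M * Mg^2) * ‖g x‖ := by
    intro x
    simp only [hFdef]
    rw [Real.norm_eq_abs, abs_mul, _root_.abs_of_nonneg (by rw [hN (g x)]; positivity : (0:ℝ) ≤ ((starRingEnd ℂ) (g x) * g x).re), hN (g x)]
    calc |(Complex.I * (starRingEnd ℂ) (f x) * g x).re| * ‖g x‖^2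
        ≤ (‖f x‖ * ‖g x‖) * ‖g x‖^2 := mul_le_mul_of_nonneg_right (e2 x) (sq_nonneg _)
      _ = (‖f x‖ * ‖g x‖^2) * ‖g x‖ := by ring
      _ ≤ (M * Mg^2) * ‖g x‖ := by
          apply mul_le_mul_of_nonneg_right _ (norm_nonneg _)
          exact mul_le_mul (hM x) (pow_le_pow_left₀ (norm_nonneg _) (hMg x) 2)
            (sq_nonneg _) hM0
  have hlim : Filter.Tendsto (fun x : ℝ => (M * Mg^2) * ‖g x‖) (Filter.cocompact ℝ) (𝓝 0) := by
    simpa using hg0cocompact.const_mul (M * Mg^2)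
  have htop : Filter.Tendsto F Filter.atTop (𝓝 0) :=
    squeeze_zero_norm hFbound (hlim.mono_left _root_.atTop_le_cocompact)
  have hbot : Filter.Tendsto F Filter.atBot (𝓝 0) :=
    squeeze_zero_norm hFbound (hlim.mono_left _root_.atBot_le_cocompact)
  have hΦint_eq : ∫ x : ℝ, Φ x = 0 := by
    have := integral_of_hasDerivAt_of_tendsto hFderiv hint_Φ hbot htop
    simpa using this
  -- pointwise inequality
  have hpt : ∀ x : ℝ, ‖g x‖^4 ≤ β * Φ x + 3 * M * (‖h x‖ * ‖g x‖^2) := by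
    intro x
    have hβΦ : β * Φ x = ((starRingEnd ℂ) (g x) * g x).re ^ 2
        - ((starRingEnd ℂ) (f x) * h x).re * ((starRingEnd ℂ) (g x) * g x).re
        - 2 * (Complex.I * (starRingEnd ℂ) (f x) * g x).re
          * ((starRingEnd ℂ) (g x) * h x).im := by
      simp only [hΦdef]
      field_simp
    have hNx := hN (g x)
    have q1 : ((starRingEnd ℂ) (f x) * h x).re * ((starRingEnd ℂ) (g x) * g x).re
        ≤ M * (‖h x‖ * ‖g x‖^2) := by
      rw [hNx]
      calc ((starRingEnd ℂ) (f x) * h x).re * ‖g x‖^2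
          ≤ (‖f x‖ * ‖h x‖) * ‖g x‖^2 :=
            mul_le_mul_of_nonneg_right ((le_abs_self _).trans (e1 x)) (sq_nonneg _)
        _ = ‖f x‖ * (‖h x‖ * ‖g x‖^2) := by ring
        _ ≤ M * (‖h x‖ * ‖g x‖^2) :=
            mul_le_mul_of_nonneg_right (hM x) (by positivity)
    have q2 : 2 * (Complex.I * (starRingEnd ℂ) (f x) * g x).re
        * ((starRingEnd ℂ) (g x) * h x).im ≤ 2 * M * (‖h x‖ * ‖g x‖^2) := by
      calc 2 * (Complex.I * (starRingEnd ℂ) (f x) * g x).re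
            * ((starRingEnd ℂ) (g x) * h x).im
          ≤ |2 * (Complex.I * (starRingEnd ℂ) (f x) * g x).re
            * ((starRingEnd ℂ) (g x) * h x).im| := le_abs_self _
        _ = 2 * (|(Complex.I * (starRingEnd ℂ) (f x) * g x).re|
            * |((starRingEnd ℂ) (g x) * h x).im|) := by
            rw [abs_mul, abs_mul, _root_.abs_two, mul_assoc]
        _ ≤ 2 * ((‖f x‖ * ‖g x‖) * (‖g x‖ * ‖h x‖)) := by
            apply mul_le_mul_of_nonneg_left _ (by norm_num)
            exact mul_le_mul (e2 x) (e3 x) (abs_nonneg _) (by positivity)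
        _ = 2 * (‖f x‖ * (‖h x‖ * ‖g x‖^2)) := by ring
        _ ≤ 2 * (M * (‖h x‖ * ‖g x‖^2)) := by
            apply mul_le_mul_of_nonneg_left _ (by norm_num)
            exact mul_le_mul_of_nonneg_right (hM x) (by positivity)
        _ = 2 * M * (‖h x‖ * ‖g x‖^2) := by ring
    have : ‖g x‖^4 = β * Φ x
        + ((starRingEnd ℂ) (f x) * h x).re * ((starRingEnd ℂ) (g x) * g x).re
        + 2 * (Complex.I * (starRingEnd ℂ) (f x) * g x).re
          * ((starRingEnd ℂ) (g x) * h x).im := by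
      rw [hβΦ, hNx]; ring
    linarith [q1, q2]
  -- integrate
  calc ∫ x : ℝ, ‖g x‖^4
      ≤ ∫ x : ℝ, (β * Φ x + 3 * M * (‖h x‖ * ‖g x‖^2)) := by
        apply integral_mono hint_g4 ((hint_Φ.const_mul β).add (hint_hg2.const_mul (3 * M)))
        intro x
        exact hpt x
    _ = 3 * M * ∫ x : ℝ, ‖h x‖ * ‖g x‖^2 := by
        have h2 : ∫ x : ℝ, β * Φ x = 0 := by
          rw [integral_const_mul, hΦint_eq, mul_zero]
        rw [integral_add (hint_Φ.const_mul β) (hint_hg2.const_mul (3 * M)), h2, zero_add,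
          integral_const_mul]


/-- There is a constant `C > 0` depending only on `c₂` such that for every
`t ≥ 1` and every Schwartz function `f : ℝ → ℂ`,
`‖𝓛_t f‖_{L⁴} ≤ C ‖f‖_{L^∞}^{1/2} ‖𝓛_t² f‖_{L²}^{1/2}`, where `𝓛_t² f = 𝓛_t (𝓛_t f)`. -/
theorem L4_bound_by_L_squared (c₂ : ℝ) (hc₂ : 0 < c₂) :
    ∃ C : ℝ, 0 < C ∧ ∀ c₁ : ℝ, ∀ t : ℝ, 1 ≤ t → ∀ f : SchwartzMap ℝ ℂ,
      (eLpNorm (vecL c₂ c₁ t (⇑f)) 4 volume).toReal ≤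
        C * (⨆ x : ℝ, ‖f x‖) ^ ((1:ℝ)/2) *
          (eLpNorm (vecL c₂ c₁ t (vecL c₂ c₁ t (⇑f))) 2 volume).toReal ^ ((1:ℝ)/2) := by
  refine ⟨2, by norm_num, ?_⟩
  intro c₁ t ht f
  have ht0 : (0:ℝ) < t := lt_of_lt_of_le one_pos ht
  have hβ : (0:ℝ) < 2 * c₂ * t := by positivity
  -- temperate growth of the multiplier
  have hw : Function.HasTemperateGrowth (fun x : ℝ => ((x:ℂ) + ((c₁ * t : ℝ):ℂ))) := by
    apply Function.HasTemperateGrowth.of_fderiv (k := 1) (C := 1 + |c₁ * t|)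
    · have hfd : fderiv ℝ (fun x : ℝ => ((x:ℂ) + ((c₁ * t : ℝ):ℂ)))
          = fun _ : ℝ => (Complex.ofRealCLM : ℝ →L[ℝ] ℂ) := by
        funext x
        exact (Complex.ofRealCLM.hasFDerivAt.add_const _).fderiv
      rw [hfd]
      exact Function.HasTemperateGrowth.const _
    · exact Complex.ofRealCLM.differentiable.add_const _
    · intro x
      calc ‖(x:ℂ) + ((c₁ * t : ℝ):ℂ)‖ ≤ ‖(x:ℂ)‖ + ‖((c₁ * t : ℝ):ℂ)‖ := norm_add_le _ _
        _ = |x| + |c₁ * t| := by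
            rw [Complex.norm_real, Complex.norm_real, Real.norm_eq_abs, Real.norm_eq_abs]
        _ ≤ (1 + |c₁ * t|) * (1 + |x|) ^ 1 := by
            rw [pow_one]
            nlinarith [abs_nonneg x, abs_nonneg (c₁ * t)]
  -- the operator on Schwartz space
  set L : SchwartzMap ℝ ℂ → SchwartzMap ℝ ℂ := fun u =>
    SchwartzMap.bilinLeftCLM (ContinuousLinearMap.mul ℝ ℂ).flip hw u
      - (2 * Complex.I * (c₂:ℂ) * (t:ℂ)) • SchwartzMap.derivCLM ℝ ℂ u with hLdef
  have hL : ∀ u : SchwartzMap ℝ ℂ, vecL c₂ c₁ t ⇑u = ⇑(L u) := by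
    intro u
    funext x
    have : (L u) x = ((x:ℂ) + ((c₁ * t : ℝ):ℂ)) * u x
        - (2 * Complex.I * (c₂:ℂ) * (t:ℂ)) * deriv (⇑u) x := by
      simp only [hLdef, SchwartzMap.sub_apply, SchwartzMap.smul_apply,
        SchwartzMap.derivCLM_apply, smul_eq_mul]
      rfl
    rw [this]
    simp only [vecL]
    push_cast
    ring
  set gS : SchwartzMap ℝ ℂ := L f with hgSdef
  set hS : SchwartzMap ℝ ℂ := L gS with hhSdef
  have hg_eq : vecL c₂ c₁ t ⇑f = ⇑gS := hL f
  have hh_eq : vecL c₂ c₁ t (vecL c₂ c₁ t ⇑f) = ⇑hS := by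
    rw [hg_eq]; exact hL gS
  -- the key inequality
  have hgrel : ∀ x : ℝ, gS x = ((x + c₁ * t : ℝ):ℂ) * f x
      - Complex.I * ((2 * c₂ * t : ℝ):ℂ) * deriv (⇑f) x := by
    intro x
    rw [← congrFun (hL f) x]
    simp only [vecL]
    push_cast
    ring
  have hhrel : ∀ x : ℝ, hS x = ((x + c₁ * t : ℝ):ℂ) * gS x
      - Complex.I * ((2 * c₂ * t : ℝ):ℂ) * deriv (⇑gS) x := by
    intro x
    rw [← congrFun (hL gS) x]
    simp only [vecL]
    push_cast
    ring
  have KEY := keylemma (2 * c₂ * t) (c₁ * t) hβ f gS hS hgrel hhrel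
  set M : ℝ := ⨆ x : ℝ, ‖f x‖ with hMdef
  have hM0 : 0 ≤ M := by
    have hbdd : BddAbove (Set.range fun x : ℝ => ‖f x‖) := by
      refine ⟨SchwartzMap.seminorm ℝ 0 0 f, ?_⟩
      rintro y ⟨x, rfl⟩
      exact f.norm_le_seminorm ℝ x
    exact (norm_nonneg (f 0)).trans (le_ciSup hbdd 0)
  -- integrability facts
  have hMg : ∀ x : ℝ, ‖gS x‖ ≤ SchwartzMap.seminorm ℝ 0 0 gS := gS.norm_le_seminorm ℝ
  have hMh : ∀ x : ℝ, ‖hS x‖ ≤ SchwartzMap.seminorm ℝ 0 0 hS := hS.norm_le_seminorm ℝ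
  have hMg0 : 0 ≤ SchwartzMap.seminorm ℝ 0 0 gS := (norm_nonneg _).trans (hMg 0)
  have hMh0 : 0 ≤ SchwartzMap.seminorm ℝ 0 0 hS := (norm_nonneg _).trans (hMh 0)
  have hint_g4 : Integrable (fun x : ℝ => ‖gS x‖^4) volume := by
    refine ((gS.integrable.norm.const_mul ((SchwartzMap.seminorm ℝ 0 0 gS)^3)).mono'
      ((gS.continuous.norm.pow 4).aestronglyMeasurable)
      (Filter.Eventually.of_forall fun x => ?_))
    have h1 : ‖gS x‖^4 = ‖gS x‖^3 * ‖gS x‖ := by ring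
    rw [Real.norm_of_nonneg (by positivity), h1]
    exact mul_le_mul_of_nonneg_right (pow_le_pow_left₀ (norm_nonneg _) (hMg x) 3) (norm_nonneg _)
  have hint_h2 : Integrable (fun x : ℝ => ‖hS x‖^2) volume := by
    refine ((hS.integrable.norm.const_mul (SchwartzMap.seminorm ℝ 0 0 hS)).mono'
      ((hS.continuous.norm.pow 2).aestronglyMeasurable)
      (Filter.Eventually.of_forall fun x => ?_))
    have h1 : ‖hS x‖^2 = ‖hS x‖ * ‖hS x‖ := by ring
    rw [Real.norm_of_nonneg (by positivity), h1]
    exact mul_le_mul_of_nonneg_right (hMh x) (norm_nonneg _)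
  -- Hölder
  have hconj : (2:ℝ).HolderConjugate 2 := Real.HolderConjugate.two_two
  have mem1 : MemLp (fun x : ℝ => ‖hS x‖) (ENNReal.ofReal 2) volume := by
    rw [show ENNReal.ofReal 2 = 2 by norm_num]
    exact (memLp_two_iff_integrable_sq hS.continuous.norm.aestronglyMeasurable).2
      (by simpa using hint_h2)
  have mem2 : MemLp (fun x : ℝ => ‖gS x‖^2) (ENNReal.ofReal 2) volume := by
    rw [show ENNReal.ofReal 2 = 2 by norm_num]
    refine (memLp_two_iff_integrable_sq
      ((gS.continuous.norm.pow 2).aestronglyMeasurable)).2 ?_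
    have : (fun x : ℝ => (‖gS x‖^2)^2) = fun x : ℝ => ‖gS x‖^4 := by
      funext x; ring
    simp only [Pi.pow_apply]
    rw [this]
    exact hint_g4
  have HOLDER : ∫ x : ℝ, ‖hS x‖ * ‖gS x‖^2
      ≤ (∫ x : ℝ, ‖hS x‖^2) ^ ((1:ℝ)/2) * (∫ x : ℝ, ‖gS x‖^4) ^ ((1:ℝ)/2) := by
    have := integral_mul_le_Lp_mul_Lq_of_nonneg hconj
      (Filter.Eventually.of_forall fun x => norm_nonneg (hS x))
      (Filter.Eventually.of_forall fun x : ℝ => sq_nonneg ‖gS x‖) mem1 mem2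
    have e2 : (fun a : ℝ => ‖hS a‖ ^ (2:ℝ)) = fun a : ℝ => ‖hS a‖^2 := by
      funext a
      rw [show (2:ℝ) = ((2:ℕ):ℝ) by norm_num, Real.rpow_natCast]
    have e4 : (fun a : ℝ => (‖gS a‖^2) ^ (2:ℝ)) = fun a : ℝ => ‖gS a‖^4 := by
      funext a
      rw [show (2:ℝ) = ((2:ℕ):ℝ) by norm_num, Real.rpow_natCast]
      ring
    rw [e2, e4] at this
    exact this
  set A : ℝ := ∫ x : ℝ, ‖gS x‖^4 with hAdef
  set B : ℝ := ∫ x : ℝ, ‖hS x‖^2 with hBdef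
  have hA0 : 0 ≤ A := integral_nonneg fun x => by positivity
  have hB0 : 0 ≤ B := integral_nonneg fun x => by positivity
  have hsq : A ≤ 9 * M^2 * B := by
    have hstep : A ≤ 3 * M * (B ^ ((1:ℝ)/2) * A ^ ((1:ℝ)/2)) := by
      calc A ≤ 3 * M * ∫ x : ℝ, ‖hS x‖ * ‖gS x‖^2 := KEY
        _ ≤ 3 * M * (B ^ ((1:ℝ)/2) * A ^ ((1:ℝ)/2)) := by
            apply mul_le_mul_of_nonneg_left HOLDER (by positivity)
    rw [← Real.sqrt_eq_rpow, ← Real.sqrt_eq_rpow] at hstep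
    nlinarith [Real.sqrt_nonneg A, Real.sqrt_nonneg B, Real.sq_sqrt hA0, Real.sq_sqrt hB0,
      sq_nonneg (Real.sqrt A - 3 * M * Real.sqrt B), hM0,
      mul_nonneg (mul_nonneg hM0 (Real.sqrt_nonneg A)) (Real.sqrt_nonneg B)]
  -- convert eLpNorms
  have memg4 : MemLp (⇑gS) 4 volume := by
    rw [← memLp_norm_rpow_iff (q := 4) gS.continuous.aestronglyMeasurable
      (by norm_num : (4:ℝ≥0∞) ≠ 0) (by norm_num : (4:ℝ≥0∞) ≠ ∞)]
    rw [ENNReal.div_self (by norm_num) (by norm_num), memLp_one_iff_integrable]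
    have : (fun x : ℝ => ‖gS x‖ ^ (4:ℝ≥0∞).toReal) = fun x : ℝ => ‖gS x‖^4 := by
      funext x
      rw [show (4:ℝ≥0∞).toReal = ((4:ℕ):ℝ) by norm_num, Real.rpow_natCast]
    rw [this]
    exact hint_g4
  have memh2 : MemLp (⇑hS) 2 volume := by
    exact (memLp_two_iff_integrable_sq_norm hS.continuous.aestronglyMeasurable).2
      (by simpa using hint_h2)
  have elp4 : (eLpNorm (⇑gS) 4 volume).toReal = A ^ ((4:ℝ)⁻¹) := by
    rw [memg4.eLpNorm_eq_integral_rpow_norm (by norm_num) (by norm_num)]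
    rw [ENNReal.toReal_ofReal (by positivity)]
    have h1 : (4:ℝ≥0∞).toReal = (4:ℝ) := by norm_num
    simp only [h1]
    have h2 : ∀ a : ℝ, ‖gS a‖ ^ (4:ℝ) = ‖gS a‖^4 := fun a => by
      rw [show (4:ℝ) = ((4:ℕ):ℝ) by norm_num, Real.rpow_natCast]
    simp only [h2]
    rfl
  have elp2 : (eLpNorm (⇑hS) 2 volume).toReal = B ^ ((2:ℝ)⁻¹) := by
    rw [memh2.eLpNorm_eq_integral_rpow_norm (by norm_num) (by norm_num)]
    rw [ENNReal.toReal_ofReal (by positivity)]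
    have h1 : (2:ℝ≥0∞).toReal = (2:ℝ) := by norm_num
    simp only [h1]
    have h2 : ∀ a : ℝ, ‖hS a‖ ^ (2:ℝ) = ‖hS a‖^2 := fun a => by
      rw [show (2:ℝ) = ((2:ℕ):ℝ) by norm_num, Real.rpow_natCast]
    simp only [h2]
    rfl
  rw [hh_eq, hg_eq, elp4, elp2]
  -- final rpow computation
  have hfinal : A ^ ((4:ℝ)⁻¹) ≤ 2 * M ^ ((1:ℝ)/2) * (B ^ ((2:ℝ)⁻¹)) ^ ((1:ℝ)/2) := by
    have h1 : A ^ ((4:ℝ)⁻¹) ≤ (9 * M^2 * B) ^ ((4:ℝ)⁻¹) :=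
      Real.rpow_le_rpow hA0 hsq (by norm_num)
    have h2 : ((9:ℝ) * M^2 * B) ^ ((4:ℝ)⁻¹)
        = (9:ℝ) ^ ((4:ℝ)⁻¹) * (M^2) ^ ((4:ℝ)⁻¹) * B ^ ((4:ℝ)⁻¹) := by
      rw [Real.mul_rpow (by positivity) hB0, Real.mul_rpow (by norm_num) (by positivity)]
    have h3 : ((M:ℝ)^2) ^ ((4:ℝ)⁻¹) = M ^ ((1:ℝ)/2) := by
      rw [show ((M:ℝ)^2) = M ^ ((2:ℕ):ℝ) by rw [Real.rpow_natCast],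
        ← Real.rpow_mul hM0]
      norm_num
    have h4 : (B ^ ((2:ℝ)⁻¹)) ^ ((1:ℝ)/2) = B ^ ((4:ℝ)⁻¹) := by
      rw [← Real.rpow_mul hB0]
      norm_num
    have h5 : (9:ℝ) ^ ((4:ℝ)⁻¹) ≤ 2 := by
      have : ((9:ℝ)) ^ ((4:ℝ)⁻¹) ≤ ((16:ℝ)) ^ ((4:ℝ)⁻¹) :=
        Real.rpow_le_rpow (by norm_num) (by norm_num) (by norm_num)
      apply this.trans
      rw [show (16:ℝ) = 2 ^ ((4:ℕ):ℝ) by rw [Real.rpow_natCast]; norm_num,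
        ← Real.rpow_mul (by norm_num)]
      norm_num
    calc A ^ ((4:ℝ)⁻¹) ≤ (9:ℝ) ^ ((4:ℝ)⁻¹) * (M^2) ^ ((4:ℝ)⁻¹) * B ^ ((4:ℝ)⁻¹) := by
          rw [← h2]; exact h1
      _ = (9:ℝ) ^ ((4:ℝ)⁻¹) * (M ^ ((1:ℝ)/2) * (B ^ ((2:ℝ)⁻¹)) ^ ((1:ℝ)/2)) := by
          rw [h3, h4]; ring
      _ ≤ 2 * (M ^ ((1:ℝ)/2) * (B ^ ((2:ℝ)⁻¹)) ^ ((1:ℝ)/2)) := by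
          apply mul_le_mul_of_nonneg_right h5 (by positivity)
      _ = 2 * M ^ ((1:ℝ)/2) * (B ^ ((2:ℝ)⁻¹)) ^ ((1:ℝ)/2) := by ring
  exact hfinal


end
end

section
/- Let α > 0 and λ = λ₁ + iλ₂ ∈ ℂ with λ₂ ≥ α|λ₁| / (2√(α+1)). Then for all complex numbers z ≠ 0 and w, one has −Im( λ ( ((α+2)/2) |z|^α w − (α/2) |z|^{α−2} z² \overline{w} ) \overline{w} ) ≤ ( (α/2)√(λ₁²+λ₂²) − ((α+2)/2) λ₂ ) |z|^α |w|² ≤ 0. -/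
open Real Complex

noncomputable section

/-- For `α > 0` and `λ = λ₁ + iλ₂` with `λ₂ ≥ α|λ₁|/(2√(α+1))`, and all
complex `z ≠ 0` and `w`:
`−Im(λ(((α+2)/2)|z|^α w − (α/2)|z|^{α−2} z² w̄) w̄)
  ≤ ((α/2)√(λ₁²+λ₂²) − ((α+2)/2)λ₂)|z|^α |w|² ≤ 0`. -/
theorem dissipative_pointwise_inequality (α : ℝ) (hα : 0 < α) (lam : ℂ)
    (hlam : α * |lam.re| / (2 * Real.sqrt (α + 1)) ≤ lam.im)
    (z w : ℂ) (hz : z ≠ 0) :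
    -(lam * ((((α + 2) / 2 : ℝ) : ℂ) * ((‖z‖ ^ α : ℝ) : ℂ) * w -
          (((α / 2 : ℝ)) : ℂ) * ((‖z‖ ^ (α - 2) : ℝ) : ℂ) * z ^ 2 * (starRingEnd ℂ) w) *
        (starRingEnd ℂ) w).im ≤
      ((α / 2) * Real.sqrt (lam.re ^ 2 + lam.im ^ 2) - ((α + 2) / 2) * lam.im) *
        ‖z‖ ^ α * ‖w‖ ^ 2 ∧
    ((α / 2) * Real.sqrt (lam.re ^ 2 + lam.im ^ 2) - ((α + 2) / 2) * lam.im) *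
        ‖z‖ ^ α * ‖w‖ ^ 2 ≤ 0 := by
  have hr : 0 < ‖z‖ := norm_pos_iff.mpr hz
  have hS : Real.sqrt (lam.re ^ 2 + lam.im ^ 2) = ‖lam‖ := by
    rw [Complex.norm_def, Complex.normSq_apply]; ring_nf
  have hlamim : 0 ≤ lam.im := le_trans (by positivity) hlam
  have hkey : α * ‖lam‖ ≤ (α + 2) * lam.im := by
    have hden : 0 < 2 * Real.sqrt (α + 1) := by positivity
    have h1 : α * |lam.re| ≤ 2 * Real.sqrt (α + 1) * lam.im := by
      rw [div_le_iff₀ hden] at hlam; linarith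
    have hsq : Real.sqrt (α + 1) ^ 2 = α + 1 := Real.sq_sqrt (by linarith)
    have h2 : α ^ 2 * lam.re ^ 2 ≤ 4 * (α + 1) * lam.im ^ 2 := by
      nlinarith [mul_self_le_mul_self (by positivity : (0:ℝ) ≤ α * |lam.re|) h1,
        _root_.sq_abs lam.re, Real.sqrt_nonneg (α + 1)]
    have habs : ‖lam‖ ^ 2 = lam.re ^ 2 + lam.im ^ 2 := by
      rw [Complex.sq_norm, Complex.normSq_apply]; ring
    have h3 : (α * ‖lam‖) ^ 2 ≤ ((α + 2) * lam.im) ^ 2 := by nlinarith [h2, habs]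
    exact le_of_pow_le_pow_left₀ two_ne_zero (mul_nonneg (by linarith) hlamim) h3
  have hrw : ‖z‖ ^ (α - 2) * ‖z‖ ^ (2 : ℕ) = ‖z‖ ^ α := by
    rw [← Real.rpow_natCast ‖z‖ 2, ← Real.rpow_add hr]; norm_num
  have hww : w * (starRingEnd ℂ) w = ((‖w‖ ^ 2 : ℝ) : ℂ) := by
    rw [Complex.mul_conj, Complex.normSq_eq_norm_sq]
  have him : (lam * ((((α / 2 : ℝ)) : ℂ) * ((‖z‖ ^ (α - 2) : ℝ) : ℂ) * z ^ 2 *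
      ((starRingEnd ℂ) w) ^ 2)).im ≤ (α / 2) * ‖lam‖ * ‖z‖ ^ α * ‖w‖ ^ 2 := by
    have h := Complex.abs_im_le_norm (lam * ((((α / 2 : ℝ)) : ℂ) *
      ((‖z‖ ^ (α - 2) : ℝ) : ℂ) * z ^ 2 * ((starRingEnd ℂ) w) ^ 2))
    have habs : ‖(lam * ((((α / 2 : ℝ)) : ℂ) * ((‖z‖ ^ (α - 2) : ℝ) : ℂ) * z ^ 2 *
        ((starRingEnd ℂ) w) ^ 2))‖ = (α / 2) * ‖lam‖ * ‖z‖ ^ α * ‖w‖ ^ 2 := by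
      rw [norm_mul, norm_mul, norm_mul, norm_mul, norm_pow, norm_pow, Complex.norm_real,
        Complex.norm_real, Real.norm_eq_abs, Real.norm_eq_abs, Complex.norm_conj]
      rw [_root_.abs_of_nonneg (by positivity : (0:ℝ) ≤ α / 2),
        _root_.abs_of_nonneg (by positivity : (0:ℝ) ≤ ‖z‖ ^ (α - 2)),
        ← hrw]
      ring
    calc (lam * ((((α / 2 : ℝ)) : ℂ) * ((‖z‖ ^ (α - 2) : ℝ) : ℂ) * z ^ 2 *
          ((starRingEnd ℂ) w) ^ 2)).im
        ≤ |(lam * ((((α / 2 : ℝ)) : ℂ) * ((‖z‖ ^ (α - 2) : ℝ) : ℂ) * z ^ 2 *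
          ((starRingEnd ℂ) w) ^ 2)).im| := le_abs_self _
      _ ≤ _ := h
      _ = _ := habs
  have hexp : lam * ((((α + 2) / 2 : ℝ) : ℂ) * ((‖z‖ ^ α : ℝ) : ℂ) * w -
          (((α / 2 : ℝ)) : ℂ) * ((‖z‖ ^ (α - 2) : ℝ) : ℂ) * z ^ 2 * (starRingEnd ℂ) w) *
        (starRingEnd ℂ) w
      = lam * ((((α + 2) / 2 * ‖z‖ ^ α * ‖w‖ ^ 2 : ℝ)) : ℂ) -
        lam * ((((α / 2 : ℝ)) : ℂ) * ((‖z‖ ^ (α - 2) : ℝ) : ℂ) * z ^ 2 *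
          ((starRingEnd ℂ) w) ^ 2) := by
    calc lam * ((((α + 2) / 2 : ℝ) : ℂ) * ((‖z‖ ^ α : ℝ) : ℂ) * w -
          (((α / 2 : ℝ)) : ℂ) * ((‖z‖ ^ (α - 2) : ℝ) : ℂ) * z ^ 2 * (starRingEnd ℂ) w) *
        (starRingEnd ℂ) w
        = lam * ((((α + 2) / 2 : ℝ) : ℂ) * ((‖z‖ ^ α : ℝ) : ℂ)) * (w * (starRingEnd ℂ) w) -
          lam * ((((α / 2 : ℝ)) : ℂ) * ((‖z‖ ^ (α - 2) : ℝ) : ℂ) * z ^ 2 *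
            ((starRingEnd ℂ) w) ^ 2) := by ring
      _ = _ := by rw [hww]; push_cast; ring
  have himeq : (lam * ((((α + 2) / 2 * ‖z‖ ^ α * ‖w‖ ^ 2 : ℝ)) : ℂ) -
        lam * ((((α / 2 : ℝ)) : ℂ) * ((‖z‖ ^ (α - 2) : ℝ) : ℂ) * z ^ 2 *
          ((starRingEnd ℂ) w) ^ 2)).im
      = lam.im * ((α + 2) / 2 * ‖z‖ ^ α * ‖w‖ ^ 2) -
        (lam * ((((α / 2 : ℝ)) : ℂ) * ((‖z‖ ^ (α - 2) : ℝ) : ℂ) * z ^ 2 *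
          ((starRingEnd ℂ) w) ^ 2)).im := by
    have hx : ∀ x : ℝ, (lam * (x : ℂ)).im = lam.im * x := fun x => by
      simp [Complex.mul_im]
    rw [Complex.sub_im, hx]
  rw [hexp, himeq, hS]
  constructor
  · linarith [him]
  · have h0 : α / 2 * ‖lam‖ - (α + 2) / 2 * lam.im ≤ 0 := by linarith
    have hrα : (0:ℝ) ≤ ‖z‖ ^ α := Real.rpow_nonneg hr.le α
    nlinarith [mul_nonneg hrα (sq_nonneg ‖w‖), h0]

end
end

section
/- Let c₂ > 0, c₁ ∈ ℝ, α > 0, t > 0, and let u : ℝ → ℂ be differentiable at a point x₀ with u(x₀) ≠ 0. Then the function |u|^α u is differentiable at x₀ and (𝓛_t(|u|^α u))(x₀) = ((α+2)/2) |u(x₀)|^α (𝓛_t u)(x₀) − (α/2) |u(x₀)|^{α−2} u(x₀)² \overline{(𝓛_t u)(x₀)}. -/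
open Real

noncomputable section

lemma normSq_rpow_eq (z : ℂ) (p : ℝ) : Complex.normSq z ^ p = ‖z‖ ^ (2 * p) := by
  rw [show Complex.normSq z = ‖z‖ ^ 2 by rw [Complex.normSq_eq_norm_sq],
    ← Real.rpow_natCast ‖z‖ 2, ← Real.rpow_mul (norm_nonneg _)]
  norm_num

/-- If `u` is differentiable at `x₀` with `u(x₀) ≠ 0`, then `|u|^α u`
is differentiable at `x₀` and
`𝓛_t(|u|^α u)(x₀) = ((α+2)/2)|u(x₀)|^α (𝓛_t u)(x₀) − (α/2)|u(x₀)|^{α−2} u(x₀)² conj((𝓛_t u)(x₀))`. -/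
theorem vecL_of_power_nonlinearity (c₂ c₁ α t : ℝ) (hc₂ : 0 < c₂) (hα : 0 < α) (ht : 0 < t)
    (u : ℝ → ℂ) (x₀ : ℝ) (hu : DifferentiableAt ℝ u x₀) (hne : u x₀ ≠ 0) :
    DifferentiableAt ℝ (fun x => ((‖u x‖ ^ α : ℝ) : ℂ) * u x) x₀ ∧
    vecL c₂ c₁ t (fun x => ((‖u x‖ ^ α : ℝ) : ℂ) * u x) x₀ =
      (((α + 2) / 2 : ℝ) : ℂ) * ((‖u x₀‖ ^ α : ℝ) : ℂ) * vecL c₂ c₁ t u x₀ -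
        ((α / 2 : ℝ) : ℂ) * ((‖u x₀‖ ^ (α - 2) : ℝ) : ℂ) * (u x₀) ^ 2 *
          (starRingEnd ℂ) (vecL c₂ c₁ t u x₀) := by
  have hu' := hu.hasDerivAt
  set u' := deriv u x₀ with hu'def
  have hre : HasDerivAt (fun x => (u x).re) u'.re x₀ :=
    Complex.reCLM.hasFDerivAt.comp_hasDerivAt x₀ hu'
  have him : HasDerivAt (fun x => (u x).im) u'.im x₀ :=
    Complex.imCLM.hasFDerivAt.comp_hasDerivAt x₀ hu'
  have hq : HasDerivAt (fun x => Complex.normSq (u x))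
      (2 * (u x₀).re * u'.re + 2 * (u x₀).im * u'.im) x₀ := by
    have h := (hre.mul hre).add (him.mul him)
    have hfun : (fun x => Complex.normSq (u x))
        = fun x => (u x).re * (u x).re + (u x).im * (u x).im := by
      funext x; simp [Complex.normSq_apply]
    rw [hfun]
    exact h.congr_deriv (by ring)
  have hqpos : 0 < Complex.normSq (u x₀) := Complex.normSq_pos.mpr hne
  have hr : HasDerivAt (fun x => Complex.normSq (u x) ^ (α / 2))
      ((2 * (u x₀).re * u'.re + 2 * (u x₀).im * u'.im) * (α / 2) *
        Complex.normSq (u x₀) ^ (α / 2 - 1)) x₀ :=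
    hq.rpow_const (Or.inl hqpos.ne')
  have heq : (fun x => ((‖u x‖ ^ α : ℝ) : ℂ) * u x)
      = fun x => ((Complex.normSq (u x) ^ (α / 2) : ℝ) : ℂ) * u x := by
    funext x
    rw [normSq_rpow_eq, show 2 * (α / 2) = α by ring]
  have hf : HasDerivAt (fun x => ((Complex.normSq (u x) ^ (α / 2) : ℝ) : ℂ) * u x)
      ((((2 * (u x₀).re * u'.re + 2 * (u x₀).im * u'.im) * (α / 2) *
        Complex.normSq (u x₀) ^ (α / 2 - 1) : ℝ) : ℂ) * u x₀ +
        ((Complex.normSq (u x₀) ^ (α / 2) : ℝ) : ℂ) * u') x₀ :=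
    (Complex.ofRealCLM.hasFDerivAt.comp_hasDerivAt x₀ hr).mul hu'
  constructor
  · rw [heq]; exact hf.differentiableAt
  · have hnpos : (0:ℝ) < ‖u x₀‖ := norm_pos_iff.mpr hne
    have e1 : Complex.normSq (u x₀) ^ (α / 2) = ‖u x₀‖ ^ α := by
      rw [normSq_rpow_eq, show 2 * (α / 2) = α by ring]
    have e2 : Complex.normSq (u x₀) ^ (α / 2 - 1) = ‖u x₀‖ ^ (α - 2) := by
      rw [normSq_rpow_eq]; ring_nf
    have hsq : Complex.normSq (u x₀) = ‖u x₀‖ ^ (2:ℝ) := by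
      simpa using normSq_rpow_eq (u x₀) 1
    have e3 : (‖u x₀‖ ^ α : ℝ) = ‖u x₀‖ ^ (α - 2) * Complex.normSq (u x₀) := by
      rw [hsq, ← Real.rpow_add hnpos]; congr 1; ring
    have e4 : u x₀ * (starRingEnd ℂ) (u x₀) = (Complex.normSq (u x₀) : ℂ) :=
      Complex.mul_conj (u x₀)
    have e5 : (((u x₀).re : ℂ) * (u'.re : ℂ) + ((u x₀).im : ℂ) * (u'.im : ℂ)) * 2
        = (starRingEnd ℂ) (u x₀) * u' + u x₀ * (starRingEnd ℂ) u' := by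
      apply Complex.ext <;>
        simp [Complex.mul_re, Complex.mul_im, Complex.add_re, Complex.add_im] <;> ring
    have e3' : ((‖u x₀‖ ^ α : ℝ) : ℂ)
        = ((‖u x₀‖ ^ (α - 2) : ℝ) : ℂ) * ((Complex.normSq (u x₀) : ℝ) : ℂ) := by
      exact_mod_cast congrArg (Complex.ofReal) e3
    rw [heq]
    simp only [vecL]
    rw [hf.deriv, ← hu'def, e1, e2, e3', ← e4]
    simp only [map_sub, map_mul, map_add, Complex.conj_I, Complex.conj_ofReal, map_ofNat]
    push_cast
    linear_combination (-(t:ℂ) * ((‖u x₀‖ ^ (α - 2) : ℝ) : ℂ) * u x₀ * Complex.I *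
      (c₂:ℂ) * (α:ℂ)) * e5

end
end
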